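/- arXiv:1307.7098 — 3 statements merged into one kernel-verified Lean document; each statement's English description precedes it below -/
import Mathlib

section
/- For any integer t > 1 and any set {c₁, …, c_t} of distinct nonzero elements of C, the elements e(c₁), …, e(c_t) — more precisely, their images under the natural map Ĉ → ℚ ⊗_ℤ Ĉ — are linearly independent over ℚ. -/
open scoped TensorProduct

/-- `Ĉ = ℤ ⊕ ∏_{i=1}^∞ C^{⊗i}`, where `C^{⊗i}` is the `i`-fold tensor power over `ℤ`. -/
abbrev Chat (C : Type) [AddCommGroup C] [Module ℤ C] : Type :=
  ℤ × Π i : ℕ+, TensorPower ℤ (i : ℕ) C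

/-- `e : C → Ĉ`, sending `c` to `(1, c, c ⊗ c, c ⊗ c ⊗ c, …)`. -/
noncomputable def eMap (C : Type) [AddCommGroup C] [Module ℤ C] (c : C) : Chat C :=
  (1, fun i => PiTensorProduct.tprod ℤ (fun _ : Fin (i : ℕ) => c))

/-- In a free `ℤ`-module, every nonzero element admits a functional not vanishing on it. -/
lemma exists_functional_ne_zero (C : Type) [AddCommGroup C] [Module ℤ C] [Module.Free ℤ C]
    {d : C} (hd : d ≠ 0) : ∃ g : C →ₗ[ℤ] ℤ, g d ≠ 0 := by
  let b := Module.Free.chooseBasis ℤ C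
  have hrepr : b.repr d ≠ 0 := by
    intro h
    exact hd (by simpa using b.repr.injective (by simp [h]))
  obtain ⟨i, hi⟩ := Finsupp.ne_iff.mp hrepr
  exact ⟨b.coord i, by simpa [Module.Basis.coord_apply] using hi⟩

/-- A functional simultaneously nonzero on a finite set of nonzero elements. -/
lemma exists_functional_forall_ne_zero (C : Type) [AddCommGroup C] [Module ℤ C]
    [Module.Free ℤ C] (S : Finset C) (hS : ∀ s ∈ S, s ≠ 0) :
    ∃ f : C →ₗ[ℤ] ℤ, ∀ s ∈ S, f s ≠ 0 := by
  classical
  induction S using Finset.induction_on with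
  | empty => exact ⟨0, by simp⟩
  | @insert d S hdS ih =>
    obtain ⟨f, hf⟩ := ih (fun s hs => hS s (Finset.mem_insert_of_mem hs))
    obtain ⟨g, hg⟩ := exists_functional_ne_zero C (hS d (Finset.mem_insert_self d S))
    set N : ℤ := ((insert d S).sup fun s => (f s).natAbs) + 1 with hN
    have hNpos : ∀ s ∈ insert d S, |f s| < N := by
      intro s hs
      have h : (f s).natAbs ≤ (insert d S).sup fun s => (f s).natAbs :=
        Finset.le_sup (f := fun s => (f s).natAbs) hs
      calc |f s| = ((f s).natAbs : ℤ) := Int.abs_eq_natAbs _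
        _ < N := by rw [hN]; exact_mod_cast Nat.lt_succ_of_le h
    refine ⟨f + N • g, ?_⟩
    intro s hs h0
    have hval : f s + N * g s = 0 := by simpa using h0
    by_cases hgs : g s = 0
    · have hsS : s ∈ S := by
        rcases Finset.mem_insert.mp hs with rfl | h
        · exact absurd hgs hg
        · exact h
      exact hf s hsS (by rwa [hgs, mul_zero, add_zero] at hval)
    · have h1 : |f s| < N := hNpos s hs
      have h2 : N ≤ |N * g s| := by
        rw [abs_mul]
        have hg1 : (1 : ℤ) ≤ |g s| := Int.one_le_abs hgs
        have hNnn : (0 : ℤ) ≤ N := by positivity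
        calc N = N * 1 := by ring
          _ ≤ |N| * |g s| := by
              rw [abs_of_nonneg hNnn]
              exact mul_le_mul_of_nonneg_left hg1 hNnn
      have h3 : |f s| = |N * g s| := by
        rw [show f s = -(N * g s) by omega, abs_neg]
      linarith

/-- Evaluation of the `n`-th tensor-power functional on `e(x)`. -/
lemma tensorPower_functional_eval (C : Type) [AddCommGroup C] [Module ℤ C]
    (f : C →ₗ[ℤ] ℤ) (n : ℕ+) (x : C) :
    PiTensorProduct.lift
      ((MultilinearMap.mkPiAlgebra ℤ (Fin (n : ℕ)) ℤ).compLinearMap fun _ => f)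
      ((eMap C x).2 n) = f x ^ (n : ℕ) := by
  simp [eMap, Finset.prod_const]

/-- For any integer `t > 1` and any set `{c₁, …, c_t}` of distinct nonzero elements of a free
abelian group `C`, the images of `e(c₁), …, e(c_t)` under the natural map `Ĉ → ℚ ⊗_ℤ Ĉ` are
linearly independent over `ℚ`. -/
theorem stmt0 (C : Type) [AddCommGroup C] [Module ℤ C] [Module.Free ℤ C]
    (t : ℕ) (ht : 1 < t) (c : Fin t → C)
    (hdist : Function.Injective c) (hne : ∀ i, c i ≠ 0) :
    LinearIndependent ℚ
      (fun i : Fin t => ((1 : ℚ) ⊗ₜ[ℤ] eMap C (c i) : ℚ ⊗[ℤ] Chat C)) := by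
  classical
  -- a functional separating the `c i`
  set S : Finset C := ((Finset.univ : Finset (Fin t × Fin t)).filter fun p => p.1 ≠ p.2).image
      (fun p => c p.1 - c p.2) with hSdef
  have hS0 : ∀ s ∈ S, s ≠ 0 := by
    intro s hs
    simp only [hSdef, Finset.mem_image, Finset.mem_filter, Finset.mem_univ, true_and] at hs
    obtain ⟨p, hp, rfl⟩ := hs
    exact sub_ne_zero.mpr fun h => hp (hdist h)
  obtain ⟨f, hf⟩ := exists_functional_forall_ne_zero C S hS0
  have hfc : Function.Injective fun i : Fin t => ((f (c i) : ℚ)) := by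
    intro i j hij
    by_contra hij'
    have hmem : c i - c j ∈ S := by
      simp only [hSdef, Finset.mem_image, Finset.mem_filter, Finset.mem_univ, true_and]
      exact ⟨(i, j), hij', rfl⟩
    have : (f (c i) : ℚ) = f (c j) := hij
    have : f (c i) = f (c j) := by exact_mod_cast this
    exact hf _ hmem (by simp [map_sub, this])
  rw [Fintype.linearIndependent_iff]
  intro g hsum
  have key : ∀ n : ℕ, ∑ i, g i * (f (c i) : ℚ) ^ n = 0 := by
    intro n
    rcases Nat.eq_zero_or_pos n with rfl | hn
    · -- degree 0: use the first projection
      have h := congrArg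
        (LinearMap.liftBaseChange ℚ ((Algebra.linearMap ℤ ℚ).comp (LinearMap.fst ℤ ℤ _)))
        hsum
      simpa [map_sum, eMap, smul_eq_mul] using h
    · -- degree `n ≥ 1`
      set np : ℕ+ := ⟨n, hn⟩ with hnp
      set F : Chat C →ₗ[ℤ] ℚ :=
        (Algebra.linearMap ℤ ℚ).comp
          ((PiTensorProduct.lift
              ((MultilinearMap.mkPiAlgebra ℤ (Fin (np : ℕ)) ℤ).compLinearMap fun _ => f)).comp
            ((LinearMap.proj np).comp (LinearMap.snd ℤ ℤ _))) with hF
      have hFe : ∀ x : C, F (eMap C x) = ((f x : ℤ) : ℚ) ^ n := by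
        intro x
        have := tensorPower_functional_eval C f np x
        simp only [hF, LinearMap.comp_apply, LinearMap.snd_apply, LinearMap.proj_apply,
          Algebra.linearMap_apply, this]
        push_cast
        rfl
      have h := congrArg (LinearMap.liftBaseChange ℚ F) hsum
      simp only [map_sum, map_smul, map_zero, LinearMap.liftBaseChange_tmul, hFe,
        one_smul, smul_eq_mul, one_mul] at h
      exact h
  have hg : g = 0 :=
    Matrix.eq_zero_of_forall_pow_sum_mul_pow_eq_zero hfc fun j => key (j : ℕ)
  exact fun i => congrFun hg i
end

section
/- The ℤ-linear map ē : ℤ[C] → Ĉ from the free abelian group on the underlying set of C to Ĉ, defined on basis elements by sending c ∈ C to e(c), is injective. -/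
open scoped TensorProduct

/-- `ē : ℤ[C] → Ĉ`, the ℤ-linear map on the free abelian group on the underlying set of `C`
(realized as finitely supported functions `C →₀ ℤ`) sending the basis element `c` to `e(c)`. -/
noncomputable def eBar (C : Type) [AddCommGroup C] [Module ℤ C] :
    (C →₀ ℤ) →ₗ[ℤ] Chat C :=
  Finsupp.linearCombination ℤ (eMap C)

-- auxiliary lemmas

-- Vandermonde-style lemma
lemma vandermonde_zero {ι : Type*} (s : Finset ι) (y : ι → ℚ) (hy : Set.InjOn y s)
    (g : ι → ℚ) (h : ∀ n : ℕ, ∑ c ∈ s, g c * y c ^ n = 0) :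
    ∀ c ∈ s, g c = 0 := by
  classical
  intro c0 hc0
  set Q : Polynomial ℚ := ∏ c ∈ s.erase c0, (Polynomial.X - Polynomial.C (y c)) with hQ
  have hsum : ∑ c ∈ s, g c * Q.eval (y c) = 0 := by
    have heval : ∀ c, Q.eval (y c) =
        ∑ n ∈ Finset.range (Q.natDegree + 1), Q.coeff n * y c ^ n := fun c =>
      Polynomial.eval_eq_sum_range _
    calc ∑ c ∈ s, g c * Q.eval (y c)
        = ∑ c ∈ s, ∑ n ∈ Finset.range (Q.natDegree + 1), Q.coeff n * (g c * y c ^ n) := by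
          refine Finset.sum_congr rfl fun c _ => ?_
          rw [heval, Finset.mul_sum]
          exact Finset.sum_congr rfl fun n _ => by ring
      _ = ∑ n ∈ Finset.range (Q.natDegree + 1), Q.coeff n * ∑ c ∈ s, g c * y c ^ n := by
          rw [Finset.sum_comm]
          exact Finset.sum_congr rfl fun n _ => by rw [Finset.mul_sum]
      _ = 0 := by simp [h]
  rw [Finset.sum_eq_single_of_mem c0 hc0 (fun c hc hne => by
      have : Q.eval (y c) = 0 := by
        rw [hQ, Polynomial.eval_prod]
        exact Finset.prod_eq_zero (i := c) (Finset.mem_erase.2 ⟨hne, hc⟩) (by simp)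
      simp [this])] at hsum
  have hQne : Q.eval (y c0) ≠ 0 := by
    rw [hQ, Polynomial.eval_prod]
    refine Finset.prod_ne_zero_iff.2 fun c hc => ?_
    simp only [Polynomial.eval_sub, Polynomial.eval_X, Polynomial.eval_C, sub_ne_zero]
    exact fun he => (Finset.mem_erase.1 hc).1 (hy (Finset.mem_erase.1 hc).2 hc0 he.symm)
  exact (mul_eq_zero.1 hsum).resolve_right hQne

-- existence of a separating functional
lemma exists_separating (C : Type) [AddCommGroup C] [Module ℤ C] [Module.Free ℤ C]
    (s : Finset C) : ∃ f : C →ₗ[ℤ] ℚ, Set.InjOn f s := by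
  classical
  by_contra hcon
  push_neg at hcon
  simp only [Set.InjOn, not_forall] at hcon
  -- the bad pairs
  set P : Finset (C × C) := (s ×ˢ s).filter fun p => p.1 ≠ p.2 with hP
  have hne : ∀ p : P, (p : C × C).1 - (p : C × C).2 ≠ 0 := by
    rintro ⟨p, hp⟩
    simp only [hP, Finset.mem_filter] at hp
    exact sub_ne_zero.2 hp.2
  set K : P → Subspace ℚ (C →ₗ[ℤ] ℚ) := fun p =>
    { carrier := {f | f ((p : C × C).1 - (p : C × C).2) = 0}
      add_mem' := fun {f g} hf hg => by
        simp only [Set.mem_setOf_eq, LinearMap.add_apply] at *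
        rw [hf, hg, add_zero]
      zero_mem' := by simp
      smul_mem' := fun a f hf => by
        simp only [Set.mem_setOf_eq, LinearMap.smul_apply] at *
        rw [hf, smul_zero] } with hK
  have hcover : ⋃ p : P, (K p : Set (C →ₗ[ℤ] ℚ)) = Set.univ := by
    refine Set.eq_univ_of_forall fun f => ?_
    obtain ⟨a, ha, b, hb, hab, hne'⟩ := hcon f
    refine Set.mem_iUnion.2 ⟨⟨(a, b), ?_⟩, ?_⟩
    · simp [hP, Finset.mem_coe.1 ha, Finset.mem_coe.1 hb, hne']
    · simpa [hK, map_sub, sub_eq_zero] using hab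
  obtain ⟨p, hp⟩ := Subspace.exists_eq_top_of_iUnion_eq_univ hcover
  -- but K p is proper: there is a functional non-vanishing on the nonzero element
  set d := (p : C × C).1 - (p : C × C).2 with hd
  have hd0 : d ≠ 0 := hne p
  obtain ⟨i, hi⟩ : ∃ i, (Module.Free.chooseBasis ℤ C).repr d i ≠ 0 := by
    by_contra hall
    push_neg at hall
    exact hd0 ((Module.Free.chooseBasis ℤ C).repr.map_eq_zero_iff.1 (Finsupp.ext hall))
  set f : C →ₗ[ℤ] ℚ :=
    (Algebra.linearMap ℤ ℚ).comp ((Module.Free.chooseBasis ℤ C).coord i) with hf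
  have : f d = 0 := by
    have : f ∈ K p := hp ▸ Submodule.mem_top
    exact this
  rw [hf] at this
  simp only [LinearMap.comp_apply, Module.Basis.coord_apply, Algebra.linearMap_apply] at this
  have h2 : (((Module.Free.chooseBasis ℤ C).repr d i : ℤ) : ℚ) = 0 := by simpa using this
  exact hi (by exact_mod_cast h2)

/-- apply `f` in each slot and multiply. -/
noncomputable def powFunctional (C : Type) [AddCommGroup C] [Module ℤ C]
    (f : C →ₗ[ℤ] ℚ) (n : ℕ) : TensorPower ℤ n C →ₗ[ℤ] ℚ :=
  PiTensorProduct.lift ((MultilinearMap.mkPiAlgebra ℤ (Fin n) ℚ).compLinearMap fun _ => f)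

lemma powFunctional_tprod (C : Type) [AddCommGroup C] [Module ℤ C]
    (f : C →ₗ[ℤ] ℚ) (n : ℕ) (c : C) :
    powFunctional C f n (PiTensorProduct.tprod ℤ fun _ : Fin n => c) = f c ^ n := by
  simp [powFunctional, PiTensorProduct.lift.tprod]

/-- The coordinate functionals on Chat. -/
noncomputable def chatFunctional (C : Type) [AddCommGroup C] [Module ℤ C]
    (f : C →ₗ[ℤ] ℚ) : ℕ → (Chat C →ₗ[ℤ] ℚ)
  | 0 => (Algebra.linearMap ℤ ℚ).comp (LinearMap.fst ℤ ℤ _)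
  | (n+1) => ((powFunctional C f (n+1)).comp
      ((LinearMap.proj (⟨n+1, Nat.succ_pos n⟩ : ℕ+)).comp (LinearMap.snd ℤ ℤ _)))

lemma chatFunctional_eMap (C : Type) [AddCommGroup C] [Module ℤ C]
    (f : C →ₗ[ℤ] ℚ) (n : ℕ) (c : C) :
    chatFunctional C f n (eMap C c) = f c ^ n := by
  cases n with
  | zero => simp [chatFunctional, eMap]
  | succ n =>
    show powFunctional C f (n+1) (PiTensorProduct.tprod ℤ (fun _ : Fin (n+1) => c)) = f c ^ (n+1)
    exact powFunctional_tprod C f (n+1) c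

/-- If `C` is a free abelian group, the map `ē : ℤ[C] → Ĉ` is injective. -/
theorem stmt1 (C : Type) [AddCommGroup C] [Module ℤ C] [Module.Free ℤ C] :
    Function.Injective ⇑(eBar C) := by
  show Function.Injective ⇑(Finsupp.linearCombination ℤ (eMap C))
  rw [← LinearMap.ker_eq_bot, LinearMap.ker_eq_bot']
  intro x hx
  obtain ⟨f, hf⟩ := exists_separating C x.support
  have key : ∀ n : ℕ, ∑ c ∈ x.support, (x c : ℚ) * f c ^ n = 0 := by
    intro n
    have h1 := congrArg (chatFunctional C f n) hx
    rw [map_zero, Finsupp.apply_linearCombination] at h1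
    rw [Finsupp.linearCombination_apply, Finsupp.sum] at h1
    simpa [chatFunctional_eMap, zsmul_eq_mul] using h1
  have hz := vandermonde_zero x.support f hf (fun c => (x c : ℚ)) key
  ext c
  by_cases hc : c ∈ x.support
  · have h2 : ((x c : ℤ) : ℚ) = 0 := hz c hc
    simp only [Finsupp.coe_zero, Pi.zero_apply]
    exact_mod_cast h2
  · simpa using Finsupp.notMem_support_iff.1 hc
end

section
/- Let t > 1 be an integer and let p₁, …, p_t be distinct nonzero homogeneous polynomials of degree 1 (i.e., distinct nonzero ℚ-linear combinations of the variables) in a polynomial ring ℚ[X₁, X₂, …] over ℚ. Then the polynomials qᵢ = ∑_{j=0}^{t−1} pᵢ^j, for i = 1, …, t, are linearly independent over ℚ. -/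
/-- Let `t > 1` and let `p₁, …, p_t` be distinct nonzero homogeneous polynomials of degree 1
in a polynomial ring `ℚ[X₁, X₂, …]` over `ℚ` (in a possibly infinite family `σ` of
indeterminates).  Then the polynomials `qᵢ = ∑_{j=0}^{t−1} pᵢ^j` for `i = 1, …, t` are
linearly independent over `ℚ`. -/
theorem stmt3 (σ : Type) (t : ℕ) (ht : 1 < t)
    (p : Fin t → MvPolynomial σ ℚ)
    (hhom : ∀ i, (p i).IsHomogeneous 1)
    (hne : ∀ i, p i ≠ 0)
    (hdist : Function.Injective p) :
    LinearIndependent ℚ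
      (fun i : Fin t => ∑ j ∈ Finset.range t, (p i) ^ j) := by
  rw [Fintype.linearIndependent_iff]
  intro g hg
  -- Step 1: extract homogeneous components of degree d for d < t
  have hcomp : ∀ d : Fin t, ∑ i, g i • (p i ^ (d : ℕ)) = 0 := by
    intro d
    have h := congrArg (MvPolynomial.homogeneousComponent (R := ℚ) (σ := σ) (d : ℕ)) hg
    rw [map_zero, map_sum] at h
    have key : ∀ i : Fin t,
        MvPolynomial.homogeneousComponent (d : ℕ) (g i • ∑ j ∈ Finset.range t, p i ^ j)
          = g i • p i ^ (d : ℕ) := by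
      intro i
      rw [map_smul, map_sum]
      congr 1
      have : ∀ j ∈ Finset.range t,
          MvPolynomial.homogeneousComponent (d : ℕ) (p i ^ j)
            = if (d : ℕ) = j then p i ^ j else 0 := by
        intro j _
        exact MvPolynomial.homogeneousComponent_of_mem
          (by simpa using ((hhom i).pow j))
      rw [Finset.sum_congr rfl this, Finset.sum_ite_eq (Finset.range t) (d : ℕ)
        (fun j => p i ^ j)]
      simp [d.isLt]
    simpa [key] using h
  -- Step 2: find a point where all the `p i` take pairwise distinct values
  set P : MvPolynomial σ ℚ :=
    ∏ ij ∈ (Finset.univ : Finset (Fin t × Fin t)).filter (fun ij => ij.1 ≠ ij.2),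
      (p ij.1 - p ij.2) with hP
  have hPne : P ≠ 0 := by
    rw [hP]
    apply Finset.prod_ne_zero_iff.mpr
    intro ij hij
    simp only [Finset.mem_filter] at hij
    exact sub_ne_zero.mpr (fun h => hij.2 (hdist h))
  obtain ⟨x, hx⟩ : ∃ x : σ → ℚ, MvPolynomial.eval x P ≠ 0 := by
    by_contra h
    push_neg at h
    exact hPne (MvPolynomial.funext (by simpa using h))
  have hinj : Function.Injective (fun i => MvPolynomial.eval x (p i)) := by
    intro i j hij
    by_contra hne'
    apply hx
    rw [hP, map_prod]
    apply Finset.prod_eq_zero (i := (i, j))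
    · simp [hne']
    · simp [sub_eq_zero, hij]
  -- Step 3: Vandermonde argument
  have hz : g = 0 := by
    apply Matrix.eq_zero_of_forall_pow_sum_mul_pow_eq_zero hinj
    intro d
    have := congrArg (MvPolynomial.eval x) (hcomp d)
    rw [map_zero, map_sum] at this
    simpa [MvPolynomial.smul_eval] using this
  exact fun i => congrFun hz i
end
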